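/- (Constant ratio of absorption probabilities, case ω ≠ 1.) With P_B(0) = ω^{−i₀}·φ₂/(1 − s), P_C(0) = 1/(1 + ω^{i₀} − φ₂), P_B(k·i₀) = s·(ω^{−i₀} − 1)·φ₂^k/((1 − s)²·(q − p)) and P_C(k·i₀) = s·(1 − ω^{i₀})·φ₂^{k−1}/((1 − s)(q − p)(1 + ω^{i₀} − φ₂)) for integers k ≥ 2, one has P_B(0)/P_C(0) = P_B(k·i₀)/P_C(k·i₀) = φ₂·(1 + ω^{i₀} − φ₂)/((1 − s)·ω^{i₀}) for every k ≥ 2, and this common ratio is strictly less than 1. -/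

import Mathlib

private lemma disc_aux (a t : ℝ) (h1 : (1 + a) ^ 2 < t ^ 2) : 0 < t ^ 2 - 4 * a := by
  nlinarith [sq_nonneg (1 - a)]

private lemma sq_aux (x y : ℝ) (hx : 0 < x) (h : x < y) : x ^ 2 < y ^ 2 := by
  nlinarith

private lemma sqlt_aux (M t a S : ℝ) (h1 : M * (M - t) = M * (2 * S - 2))
    (h2 : 0 < M * (2 * S - 2)) (ha : 0 < a) : t ^ 2 - 4 * a < (2 * M - t) ^ 2 := by
  nlinarith

private lemma key_aux (φ t M a : ℝ) (h1 : 2 * φ * t = 4 * a) (h2 : t < 2 * M)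
    (hφ : 0 < φ) : a < φ * M := by nlinarith

set_option maxHeartbeats 800000 in
/-- Constant ratio between the absorption probabilities of players B and C,
case `ω ≠ 1`. -/
theorem constant_ratio_omega_ne_one (p s : ℝ) (i₀ : ℕ)
    (hp : 0 < p) (hp1 : p < 1) (hp2 : p ≠ 1 / 2) (hs : 0 < s) (hs1 : s < 1) (hi₀ : 2 ≤ i₀)
    (q ω τ₁ τ₂ θ φ₂ : ℝ)
    (hq : q = 1 - p) (hω : ω = p / q)
    (hτ₁ : τ₁ = max 1 ω) (hτ₂ : τ₂ = min 1 ω)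
    (hθ : θ = ((τ₂ ^ i₀ - τ₁ ^ i₀) / (1 - s) - 2 * p * (τ₂ ^ (i₀ - 1) - τ₁ ^ (i₀ - 1))) /
      (q * (τ₂ - τ₁)))
    (hφ₂ : φ₂ = (θ - Real.sqrt (θ ^ 2 - 4 * ω ^ i₀)) / 2)
    (hφ₂pos : 0 < φ₂) (hφ₂lt : φ₂ < 1)
    (PB₀ PC₀ : ℝ) (PBk PCk : ℕ → ℝ)
    (hPB₀ : PB₀ = (ω ^ i₀)⁻¹ * φ₂ / (1 - s))
    (hPC₀ : PC₀ = 1 / (1 + ω ^ i₀ - φ₂))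
    (hPBk : ∀ k : ℕ, 2 ≤ k →
      PBk k = s * ((ω ^ i₀)⁻¹ - 1) * φ₂ ^ k / ((1 - s) ^ 2 * (q - p)))
    (hPCk : ∀ k : ℕ, 2 ≤ k →
      PCk k = s * (1 - ω ^ i₀) * φ₂ ^ (k - 1) / ((1 - s) * (q - p) * (1 + ω ^ i₀ - φ₂))) :
    PB₀ / PC₀ = φ₂ * (1 + ω ^ i₀ - φ₂) / ((1 - s) * ω ^ i₀) ∧
    (∀ k : ℕ, 2 ≤ k →
      PBk k / PCk k = φ₂ * (1 + ω ^ i₀ - φ₂) / ((1 - s) * ω ^ i₀)) ∧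
    φ₂ * (1 + ω ^ i₀ - φ₂) / ((1 - s) * ω ^ i₀) < 1 := by
  have hq0 : 0 < q := by rw [hq]; linarith
  have hω0 : 0 < ω := by rw [hω]; positivity
  have hpq : p = ω * q := by rw [hω]; field_simp
  have hωne : ω ≠ 1 := by
    intro h
    rw [h, one_mul] at hpq
    rw [hq] at hpq
    apply hp2; linarith
  have hqp : q - p ≠ 0 := by
    intro h
    apply hp2
    rw [hq] at h; linarith
  have ha0 : 0 < ω ^ i₀ := pow_pos hω0 i₀
  have hane : ω ^ i₀ ≠ 1 := by
    rcases lt_or_gt_of_ne hωne with h | h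
    · exact ne_of_lt (pow_lt_one₀ hω0.le h (by omega))
    · exact ne_of_gt (one_lt_pow₀ h (by omega))
  have hs' : 0 < 1 - s := by linarith
  have hωne' : ω - 1 ≠ 0 := sub_ne_zero.mpr hωne
  -- geometric sums
  set S : ℝ := ∑ j ∈ Finset.range i₀, ω ^ j with hSdef
  set S' : ℝ := ∑ j ∈ Finset.range (i₀ - 1), ω ^ j with hS'def
  have hgeom : S * (ω - 1) = ω ^ i₀ - 1 := geom_sum_mul ω i₀
  have hgeom' : S' * (ω - 1) = ω ^ (i₀ - 1) - 1 := geom_sum_mul ω (i₀ - 1)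
  have hSpos : 0 < S := by
    apply Finset.sum_pos (fun j _ => pow_pos hω0 j)
    exact Finset.nonempty_range_iff.mpr (by omega)
  have hS1 : 1 + ω ≤ S := by
    have h01 : ({0, 1} : Finset ℕ) ⊆ Finset.range i₀ := by
      intro x hx
      simp only [Finset.mem_insert, Finset.mem_singleton] at hx
      rcases hx with rfl | rfl <;> simp [Finset.mem_range] <;> omega
    calc 1 + ω = ∑ j ∈ ({0, 1} : Finset ℕ), ω ^ j := by
          rw [Finset.sum_pair (by norm_num : (0:ℕ) ≠ 1)]; norm_num
    _ ≤ S := Finset.sum_le_sum_of_subset_of_nonneg h01 (fun i _ _ => by positivity)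
  have hSgt1 : 1 < S := by linarith
  have hωS' : ω * S' = S - 1 := by
    have hpow : ω * ω ^ (i₀ - 1) = ω ^ i₀ := by
      rw [← pow_succ']
      congr 1
      omega
    have h : (ω * S') * (ω - 1) = (S - 1) * (ω - 1) := by
      linear_combination ω * hgeom' - hgeom + hpow
    exact mul_right_cancel₀ hωne' h
  -- simplify θ
  have hθ2 : θ = ((ω ^ i₀ - 1) / (1 - s) - 2 * p * (ω ^ (i₀ - 1) - 1)) / (q * (ω - 1)) := by
    rcases lt_or_gt_of_ne hωne with h | h
    · rw [hθ, hτ₁, hτ₂, max_eq_left h.le, min_eq_right h.le]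
      norm_num
    · rw [hθ, hτ₁, hτ₂, max_eq_right h.le, min_eq_left h.le]
      have h1 : q * (1 - ω) ≠ 0 := mul_ne_zero hq0.ne' (fun hz => hωne' (by linarith))
      have h2 : q * (ω - 1) ≠ 0 := mul_ne_zero hq0.ne' hωne'
      norm_num
      rw [div_eq_div_iff h1 h2]
      ring
  have hA : θ * ((q * (ω - 1)) * (1 - s)) =
      (ω ^ i₀ - 1) - 2 * p * ((ω ^ (i₀ - 1) - 1) * (1 - s)) := by
    rw [hθ2]
    field_simp
  have hB : θ * (q * (1 - s)) = S - 2 * q * (S - 1) * (1 - s) := by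
    apply mul_right_cancel₀ hωne'
    linear_combination hA - hgeom - 2 * (1 - s) * (ω ^ (i₀ - 1) - 1) * hpq +
      2 * ω * q * (1 - s) * hgeom' - 2 * q * (1 - s) * (ω - 1) * hωS'
  have hqs : q * (1 - s) ≠ 0 := by positivity
  have hqω : q * (1 + ω) = 1 := by
    have hp1' : p + q = 1 := by rw [hq]; ring
    linear_combination hp1' - hpq
  have hθ' : θ = S / (q * (1 - s)) - 2 * S + 2 := by
    have h : θ + 2 * S - 2 = S / (q * (1 - s)) := by
      rw [eq_div_iff hqs]
      linear_combination hB
    linarith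
  -- θ - 1 - ω^i₀
  have hθ1a : θ - 1 - ω ^ i₀ = S * s / (q * (1 - s)) := by
    rw [eq_div_iff hqs]
    linear_combination hB + q * (1 - s) * hgeom - S * (1 - s) * hqω
  have hθ1apos : 0 < θ - 1 - ω ^ i₀ := by
    rw [hθ1a]; exact div_pos (mul_pos hSpos hs) (mul_pos hq0 hs')
  have hθpos : 0 < θ := by linarith only [hθ1apos, ha0]
  -- discriminant
  have hD : 0 < θ ^ 2 - 4 * ω ^ i₀ :=
    disc_aux _ _ (sq_aux _ _ (by linarith only [ha0]) (by linarith only [hθ1apos]))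
  have hsqrt : Real.sqrt (θ ^ 2 - 4 * ω ^ i₀) ^ 2 = θ ^ 2 - 4 * ω ^ i₀ :=
    Real.sq_sqrt hD.le
  have hsqrtnn : 0 ≤ Real.sqrt (θ ^ 2 - 4 * ω ^ i₀) := Real.sqrt_nonneg _
  have hsd : Real.sqrt (θ ^ 2 - 4 * ω ^ i₀) = θ - 2 * φ₂ := by rw [hφ₂]; ring
  -- φ₂ is a root
  have hroot : φ₂ ^ 2 - θ * φ₂ + ω ^ i₀ = 0 := by
    linear_combination (1/4) * hsqrt +
      ((2 * φ₂ - θ - Real.sqrt (θ ^ 2 - 4 * ω ^ i₀)) / 4) * hsd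
  -- the key inequality : φ₂ * S > ω^i₀ * q * (1-s)
  have hM : 0 < S / (q * (1 - s)) := by exact div_pos hSpos (mul_pos hq0 hs')
  have hRpos : 0 < 2 * (S / (q * (1 - s))) - θ := by
    rw [hθ']
    linarith only [hM, hSgt1]
  have hsqlt : Real.sqrt (θ ^ 2 - 4 * ω ^ i₀) < 2 * (S / (q * (1 - s))) - θ := by
    apply (Real.sqrt_lt' hRpos).mpr
    have hMθ : (S / (q * (1 - s))) * ((S / (q * (1 - s))) - θ) =
        (S / (q * (1 - s))) * (2 * S - 2) := by
      rw [hθ']; ring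
    exact sqlt_aux _ _ _ _ hMθ
      (mul_pos hM (by linarith only [hSgt1] : (0:ℝ) < 2 * S - 2)) ha0
  have hkey : ω ^ i₀ * (q * (1 - s)) < φ₂ * S := by
    have h1 : 2 * φ₂ * (θ + Real.sqrt (θ ^ 2 - 4 * ω ^ i₀)) = 4 * ω ^ i₀ := by
      linear_combination 2 * φ₂ * hsd - 4 * hroot
    have h2 : θ + Real.sqrt (θ ^ 2 - 4 * ω ^ i₀) < 2 * (S / (q * (1 - s))) := by
      linarith only [hsqlt]
    have h5 : ω ^ i₀ < φ₂ * (S / (q * (1 - s))) := key_aux _ _ _ _ h1 h2 hφ₂pos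
    calc ω ^ i₀ * (q * (1 - s)) < (φ₂ * (S / (q * (1 - s)))) * (q * (1 - s)) :=
          mul_lt_mul_of_pos_right h5 (by positivity)
    _ = φ₂ * S := by field_simp
  -- the strict inequality on the numerator
  have hmain : φ₂ * (1 + ω ^ i₀ - φ₂) < (1 - s) * ω ^ i₀ := by
    have h1 : s * ω ^ i₀ < φ₂ * (θ - 1 - ω ^ i₀) := by
      rw [hθ1a, mul_div_assoc', lt_div_iff₀ (by positivity)]
      linarith only [mul_lt_mul_of_pos_left hkey hs]
    linarith only [h1, hroot, sq_nonneg φ₂]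
  have h1a : 0 < 1 + ω ^ i₀ - φ₂ := by linarith
  have h1a' : (1 : ℝ) - ω ^ i₀ ≠ 0 := fun h => hane (by linarith)
  refine ⟨?_, ?_, ?_⟩
  · rw [hPB₀, hPC₀]
    field_simp
  · intro k hk
    rw [hPBk k hk, hPCk k hk]
    have hφk : φ₂ ^ k = φ₂ ^ (k - 1) * φ₂ := by
      rw [← pow_succ]
      congr 1
      omega
    have hφ' : φ₂ ^ (k - 1) ≠ 0 := pow_ne_zero _ (ne_of_gt hφ₂pos)
    rw [hφk]
    field_simp
  · rw [div_lt_one (by positivity)]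
    linarith only [hmain]
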